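/- arXiv:1502.01796 — 4 statements merged into one kernel-verified Lean document; each statement's English description precedes it below -/
import Mathlib

section
/- For ε, b > 0 and each j = 1,2,3,4,5 there is a constant c = c(j,ε,b) such that |χ⁽ʲ⁾(x;ε,b)| ≤ c·χ'(x; ε/3, b+ε) for all x ∈ [ε, b+ε]. -/
open MeasureTheory intervalIntegral Set Filter Topology

noncomputable section

def P0 (t : ℝ) : ℝ := 462*t^6 - 1980*t^7 + 3465*t^8 - 3080*t^9 + 1386*t^10 - 252*t^11
def P1 (t : ℝ) : ℝ := 2772*t^5 - 13860*t^6 + 27720*t^7 - 27720*t^8 + 13860*t^9 - 2772*t^10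
def P2 (t : ℝ) : ℝ := 13860*t^4 - 83160*t^5 + 194040*t^6 - 221760*t^7 + 124740*t^8 - 27720*t^9
def P3 (t : ℝ) : ℝ := 55440*t^3 - 415800*t^4 + 1164240*t^5 - 1552320*t^6 + 997920*t^7 - 249480*t^8
def P4 (t : ℝ) : ℝ := 166320*t^2 - 1663200*t^3 + 5821200*t^4 - 9313920*t^5 + 6985440*t^6 - 1995840*t^7
def P5 (t : ℝ) : ℝ := 332640*t - 4989600*t^2 + 23284800*t^3 - 46569600*t^4 + 41912640*t^5 - 13970880*t^6

def Pk (k : ℕ) : ℝ → ℝ :=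
  if k = 0 then P0 else if k = 1 then P1 else if k = 2 then P2 else if k = 3 then P3
  else if k = 4 then P4 else if k = 5 then P5 else fun _ => 0

lemma Pk_cont (k : ℕ) : Continuous (Pk k) := by
  unfold Pk P0 P1 P2 P3 P4 P5
  split_ifs <;> fun_prop

lemma Pk_zero (k : ℕ) : Pk k 0 = 0 := by
  unfold Pk P0 P1 P2 P3 P4 P5; split_ifs <;> norm_num

lemma Pk_one_0 : Pk 0 1 = 1 := by norm_num [Pk, P0]

lemma Pk_one (k : ℕ) (h1 : 1 ≤ k) (h5 : k ≤ 5) : Pk k 1 = 0 := by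
  interval_cases k <;> norm_num [Pk, P1, P2, P3, P4, P5]

lemma P1_eq (t : ℝ) : P1 t = 2772 * t^5 * (1-t)^5 := by unfold P1; ring

lemma Pk_hasDerivAt (k : ℕ) (hk : k ≤ 4) (t : ℝ) : HasDerivAt (Pk k) (Pk (k+1) t) t := by
  interval_cases k
  · have h := (((((((hasDerivAt_pow 6 t).const_mul (462:ℝ)).sub
      ((hasDerivAt_pow 7 t).const_mul 1980)).add ((hasDerivAt_pow 8 t).const_mul 3465)).sub
      ((hasDerivAt_pow 9 t).const_mul 3080)).add ((hasDerivAt_pow 10 t).const_mul 1386)).sub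
      ((hasDerivAt_pow 11 t).const_mul 252))
    refine (h.congr_deriv ?_).congr_of_eventuallyEq (Filter.Eventually.of_forall fun y => ?_)
    · norm_num [Pk, P1]; ring
    · simp [Pk, P0]
  · have h := (((((((hasDerivAt_pow 5 t).const_mul (2772:ℝ)).sub
      ((hasDerivAt_pow 6 t).const_mul 13860)).add ((hasDerivAt_pow 7 t).const_mul 27720)).sub
      ((hasDerivAt_pow 8 t).const_mul 27720)).add ((hasDerivAt_pow 9 t).const_mul 13860)).sub
      ((hasDerivAt_pow 10 t).const_mul 2772))
    refine (h.congr_deriv ?_).congr_of_eventuallyEq (Filter.Eventually.of_forall fun y => ?_)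
    · norm_num [Pk, P2]; ring
    · simp [Pk, P1]
  · have h := (((((((hasDerivAt_pow 4 t).const_mul (13860:ℝ)).sub
      ((hasDerivAt_pow 5 t).const_mul 83160)).add ((hasDerivAt_pow 6 t).const_mul 194040)).sub
      ((hasDerivAt_pow 7 t).const_mul 221760)).add ((hasDerivAt_pow 8 t).const_mul 124740)).sub
      ((hasDerivAt_pow 9 t).const_mul 27720))
    refine (h.congr_deriv ?_).congr_of_eventuallyEq (Filter.Eventually.of_forall fun y => ?_)
    · norm_num [Pk, P3]; ring
    · simp [Pk, P2]
  · have h := (((((((hasDerivAt_pow 3 t).const_mul (55440:ℝ)).sub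
      ((hasDerivAt_pow 4 t).const_mul 415800)).add ((hasDerivAt_pow 5 t).const_mul 1164240)).sub
      ((hasDerivAt_pow 6 t).const_mul 1552320)).add ((hasDerivAt_pow 7 t).const_mul 997920)).sub
      ((hasDerivAt_pow 8 t).const_mul 249480))
    refine (h.congr_deriv ?_).congr_of_eventuallyEq (Filter.Eventually.of_forall fun y => ?_)
    · norm_num [Pk, P4]; ring
    · simp [Pk, P3]
  · have h := (((((((hasDerivAt_pow 2 t).const_mul (166320:ℝ)).sub
      ((hasDerivAt_pow 3 t).const_mul 1663200)).add ((hasDerivAt_pow 4 t).const_mul 5821200)).sub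
      ((hasDerivAt_pow 5 t).const_mul 9313920)).add ((hasDerivAt_pow 6 t).const_mul 6985440)).sub
      ((hasDerivAt_pow 7 t).const_mul 1995840))
    refine (h.congr_deriv ?_).congr_of_eventuallyEq (Filter.Eventually.of_forall fun y => ?_)
    · norm_num [Pk, P5]; ring
    · simp [Pk, P4]

def gk (k : ℕ) (t : ℝ) : ℝ :=
  if t ≤ 0 then 0 else if t < 1 then Pk k t else if k = 0 then 1 else 0

lemma gk_eq_Pk (k : ℕ) (hk : k ≤ 5) {t : ℝ} (ht : t ∈ Icc (0:ℝ) 1) : gk k t = Pk k t := by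
  unfold gk
  split_ifs with h1 h2 h3
  · have : t = 0 := le_antisymm h1 ht.1
    rw [this, Pk_zero]
  · rfl
  · have : t = 1 := le_antisymm ht.2 (not_lt.mp h2)
    rw [this, h3, Pk_one_0]
  · have : t = 1 := le_antisymm ht.2 (not_lt.mp h2)
    rw [this, Pk_one k (Nat.one_le_iff_ne_zero.mpr h3) hk]

lemma gk_one_val (k : ℕ) (hk : k ≠ 0) {t : ℝ} (ht : 1 ≤ t) : gk k t = 0 := by
  unfold gk
  rw [if_neg (by linarith), if_neg (by linarith), if_neg hk]

lemma gk_hasDerivAt (k : ℕ) (hk : k ≤ 4) (t : ℝ) : HasDerivAt (gk k) (gk (k+1) t) t := by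
  rcases lt_trichotomy t 0 with h0 | rfl | h0
  · have he : gk k =ᶠ[𝓝 t] fun _ => (0:ℝ) := by
      filter_upwards [Iio_mem_nhds h0] with y hy
      simp [gk, le_of_lt hy.out]
    have h := (hasDerivAt_const t (0:ℝ)).congr_of_eventuallyEq he
    simpa [gk, h0.le] using h
  · have h1 : HasDerivWithinAt (gk k) 0 (Iic 0) 0 := by
      refine (hasDerivWithinAt_const 0 (Iic (0:ℝ)) (0:ℝ)).congr ?_ ?_
      · intro y hy; simp [gk, hy.out]
      · simp [gk]
    have h2 : HasDerivWithinAt (gk k) 0 (Ici 0) 0 := by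
      have hp := ((Pk_hasDerivAt k hk 0).hasDerivWithinAt (s := Ici (0:ℝ)))
      rw [Pk_zero] at hp
      refine hp.congr_of_eventuallyEq ?_ (by simp [gk, Pk_zero])
      filter_upwards [Ico_mem_nhdsGE (by norm_num : (0:ℝ) < 1)]
        with y hy
      rcases eq_or_lt_of_le hy.1 with h | h
      · simp [gk, ← h, Pk_zero]
      · simp [gk, not_le.mpr h, hy.2]
    have h := (h1.union h2)
    rw [Iic_union_Ici, hasDerivWithinAt_univ] at h
    simpa [gk] using h
  · rcases lt_trichotomy t 1 with h1 | rfl | h1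
    · have he : gk k =ᶠ[𝓝 t] Pk k := by
        filter_upwards [Ioo_mem_nhds h0 h1] with y hy
        simp [gk, not_le.mpr hy.1, hy.2]
      have h := ((Pk_hasDerivAt k hk t).congr_of_eventuallyEq he)
      simpa [gk, not_le.mpr h0, h1] using h
    · have ha : HasDerivWithinAt (gk k) 0 (Iic 1) 1 := by
        have hp := ((Pk_hasDerivAt k hk 1).hasDerivWithinAt (s := Iic (1:ℝ)))
        rw [Pk_one (k+1) (by omega) (by omega)] at hp
        refine hp.congr_of_eventuallyEq ?_ ?_
        · filter_upwards [Ioc_mem_nhdsLE (by norm_num : (0:ℝ) < 1)]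
            with y hy
          exact gk_eq_Pk k (by omega) ⟨hy.1.le, hy.2⟩
        · exact gk_eq_Pk k (by omega) ⟨by norm_num, le_refl 1⟩
      have hbv : HasDerivWithinAt (gk k) 0 (Ici 1) 1 := by
        refine (hasDerivWithinAt_const 1 (Ici (1:ℝ)) (if k = 0 then (1:ℝ) else 0)).congr ?_ ?_
        · intro y hy
          simp [gk, not_le.mpr (by linarith [hy.out] : (0:ℝ) < y), not_lt.mpr hy.out]
        · simp [gk]
      have h := (ha.union hbv)
      rw [Iic_union_Ici, hasDerivWithinAt_univ] at h
      simpa [gk_one_val (k+1) (by omega) (le_refl 1)] using h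
    · have he : gk k =ᶠ[𝓝 t] fun _ => if k = 0 then (1:ℝ) else 0 := by
        filter_upwards [Ioi_mem_nhds h1] with y hy
        simp [gk, not_le.mpr (by linarith [hy.out] : (0:ℝ) < y), not_lt.mpr (le_of_lt hy.out)]
      have h := (hasDerivAt_const t (if k = 0 then (1:ℝ) else 0)).congr_of_eventuallyEq he
      simpa [gk_one_val (k+1) (by omega) h1.le] using h

lemma integrand_hasDeriv (y : ℝ) :
    HasDerivAt (fun y : ℝ => y^6/6 - 5*y^7/7 + 10*y^8/8 - 10*y^9/9 + 5*y^10/10 - y^11/11)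
      (y^5 * (1-y)^5) y := by
  have h := ((((((hasDerivAt_pow 6 y).div_const 6).sub
    (((hasDerivAt_pow 7 y).const_mul (5:ℝ)).div_const 7)).add
    (((hasDerivAt_pow 8 y).const_mul (10:ℝ)).div_const 8)).sub
    (((hasDerivAt_pow 9 y).const_mul (10:ℝ)).div_const 9)).add
    (((hasDerivAt_pow 10 y).const_mul (5:ℝ)).div_const 10)).sub
    ((hasDerivAt_pow 11 y).div_const 11)
  refine (h.congr_deriv ?_).congr_of_eventuallyEq (Filter.Eventually.of_forall fun z => ?_)
  · push_cast
    ring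
  · rfl

theorem stmt_5 (ε b : ℝ) (hε : 0 < ε) (hb : 0 < b)
    (ρ : ℝ → ℝ) (χ : ℝ → ℝ → ℝ → ℝ)
    (hρ : ∀ x : ℝ, ρ x = 2772 * ∫ y in (0:ℝ)..x, y ^ 5 * (1 - y) ^ 5)
    (hχ : ∀ α β x : ℝ, 0 < α → 0 < β → χ α β x =
      if x ≤ α then 0 else if x < β + α then ρ ((x - α) / β) else 1) :
    ∀ j : ℕ, 1 ≤ j → j ≤ 5 →
      ∃ c : ℝ, ∀ x ∈ Set.Icc ε (b + ε),
        |iteratedDeriv j (χ ε b) x| ≤ c * deriv (χ (ε / 3) (b + ε)) x := by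
  -- ρ is the explicit polynomial P0
  have hρP : ∀ t : ℝ, ρ t = Pk 0 t := by
    intro t
    rw [hρ]
    have hint : ∫ y in (0:ℝ)..t, y ^ 5 * (1 - y) ^ 5 =
        (t^6/6 - 5*t^7/7 + 10*t^8/8 - 10*t^9/9 + 5*t^10/10 - t^11/11) -
        ((0:ℝ)^6/6 - 5*(0:ℝ)^7/7 + 10*(0:ℝ)^8/8 - 10*(0:ℝ)^9/9 + 5*(0:ℝ)^10/10 - (0:ℝ)^11/11) := by
      apply intervalIntegral.integral_eq_sub_of_hasDerivAt
      · intro y _; exact integrand_hasDeriv y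
      · apply Continuous.intervalIntegrable
        fun_prop
    rw [hint]
    norm_num [Pk, P0]
    ring
  -- χ ε b in terms of gk 0
  have hchi : χ ε b = fun x => gk 0 ((x - ε) / b) := by
    funext x
    rw [hχ ε b x hε hb, hρP]
    unfold gk
    have e1 : (x - ε) / b ≤ 0 ↔ x ≤ ε := by
      rw [div_le_iff₀ hb]; constructor <;> intro h <;> linarith
    have e2 : (x - ε) / b < 1 ↔ x < b + ε := by
      rw [div_lt_iff₀ hb]; constructor <;> intro h <;> linarith
    simp only [e1, e2]
    norm_num
  -- iterated derivative formula
  have hiter : ∀ j : ℕ, j ≤ 5 → ∀ x : ℝ,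
      iteratedDeriv j (χ ε b) x = (1/b)^j * gk j ((x - ε)/b) := by
    intro j
    induction j with
    | zero => intro _ x; simp [hchi]
    | succ n ih =>
      intro hn x
      rw [iteratedDeriv_succ]
      have hfun : iteratedDeriv n (χ ε b) = fun y => (1/b)^n * gk n ((y - ε)/b) :=
        funext (ih (by omega))
      rw [hfun]
      have hin : HasDerivAt (fun y : ℝ => (y - ε)/b) (1/b) x :=
        ((hasDerivAt_id x).sub_const ε).div_const b
      have hcomp := (gk_hasDerivAt n (by omega) ((x - ε)/b)).comp x hin
      have h := (hcomp.const_mul ((1/b)^n)).deriv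
      simp only [Function.comp] at h
      rw [h]
      ring
  intro j hj1 hj5
  -- bound on |Pk j| over [0,1]
  obtain ⟨C, hC⟩ := (isCompact_Icc : IsCompact (Icc (0:ℝ) 1)).exists_bound_of_continuousOn
    (Pk_cont j).continuousOn
  have hC0 : 0 ≤ C := le_trans (norm_nonneg _) (hC 0 ⟨le_refl 0, zero_le_one⟩)
  have hBE : (0:ℝ) < b + ε := by linarith
  -- lower bound for the derivative of the wider cutoff
  set m : ℝ := 2772 * (2*ε/(3*(b+ε)))^5 * (ε/3/(b+ε))^5 with hm
  have hmpos : 0 < m := by positivity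
  -- derivative of the wider cutoff
  have hderiv : ∀ x ∈ Icc ε (b + ε),
      deriv (χ (ε/3) (b+ε)) x = Pk 1 ((x - ε/3)/(b+ε)) * (1/(b+ε)) := by
    intro x hx
    have hmem : Ioo (ε/3) (b+ε+ε/3) ∈ 𝓝 x :=
      Ioo_mem_nhds (by linarith [hx.1]) (by linarith [hx.2])
    have heq : χ (ε/3) (b+ε) =ᶠ[𝓝 x] fun y => Pk 0 ((y - ε/3)/(b+ε)) := by
      filter_upwards [hmem] with y hy
      rw [hχ (ε/3) (b+ε) y (by linarith) hBE, if_neg (by linarith [hy.1]),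
        if_pos (by linarith [hy.2]), hρP]
    have hin : HasDerivAt (fun y : ℝ => (y - ε/3)/(b+ε)) (1/(b+ε)) x :=
      ((hasDerivAt_id x).sub_const (ε/3)).div_const (b+ε)
    have hcomp := (Pk_hasDerivAt 0 (by norm_num) ((x - ε/3)/(b+ε))).comp x hin
    exact (hcomp.congr_of_eventuallyEq heq).deriv
  have hderiv_ge : ∀ x ∈ Icc ε (b + ε), m / (b+ε) ≤ deriv (χ (ε/3) (b+ε)) x := by
    intro x hx
    rw [hderiv x hx]
    set s : ℝ := (x - ε/3)/(b+ε) with hs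
    have hs1 : 2*ε/(3*(b+ε)) ≤ s := by
      rw [hs, div_le_div_iff₀ (by positivity) hBE]
      nlinarith [hx.1]
    have hs2 : ε/3/(b+ε) ≤ 1 - s := by
      rw [hs]
      rw [div_le_iff₀ hBE] at *
      have : s * (b+ε) = x - ε/3 := by rw [hs]; field_simp
      nlinarith [hx.2, hBE]
    have hs0 : 0 ≤ s := le_trans (by positivity) hs1
    have hP1 : m ≤ Pk 1 s := by
      have : Pk 1 s = 2772 * s^5 * (1-s)^5 := by norm_num [Pk]; exact P1_eq s
      rw [this, hm]
      gcongr
    rw [div_eq_mul_one_div]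
    gcongr
  refine ⟨((1/b)^j * C) * (b+ε) / m, ?_⟩
  intro x hx
  have ht : (x - ε)/b ∈ Icc (0:ℝ) 1 := by
    constructor
    · apply div_nonneg (by linarith [hx.1]) hb.le
    · rw [div_le_one hb]; linarith [hx.2]
  have hLHS : |iteratedDeriv j (χ ε b) x| ≤ (1/b)^j * C := by
    rw [hiter j hj5 x, abs_mul, abs_of_nonneg (by positivity : (0:ℝ) ≤ (1/b)^j),
      gk_eq_Pk j hj5 ht]
    exact mul_le_mul_of_nonneg_left ((Real.norm_eq_abs _) ▸ hC _ ht) (by positivity)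
  have key : ((1/b)^j * C) * (b+ε) / m * (m / (b+ε)) = (1/b)^j * C := by
    field_simp
  calc |iteratedDeriv j (χ ε b) x| ≤ (1/b)^j * C := hLHS
    _ = ((1/b)^j * C) * (b+ε) / m * (m / (b+ε)) := key.symm
    _ ≤ ((1/b)^j * C) * (b+ε) / m * deriv (χ (ε/3) (b+ε)) x := by
        gcongr
        exact hderiv_ge x hx
end
end

section
/- For ε, b > 0 there is a constant c = c(ε,b) such that (χ'''(x;ε,b))²/χ'(x;ε,b) ≤ c·χ'(x; ε/3, b+ε) for all x ∈ (ε, b+ε), where χ is the C⁵ cutoff constructed from ρ(x) = 2772 ∫₀ˣ y⁵(1−y)⁵ dy. -/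
open MeasureTheory intervalIntegral Set

lemma aux_d1 (y : ℝ) : HasDerivAt (fun y : ℝ => y^5*(1-y)^5)
    (5*y^4*(1-y)^4*(1-2*y)) y := by
  have h1 : HasDerivAt (fun y : ℝ => 1 - y) (-1) y := by
    simpa using (hasDerivAt_id' y).const_sub (1:ℝ)
  have : HasDerivAt (fun y : ℝ => y^5*(1-y)^5) _ y := (hasDerivAt_pow 5 y).mul (h1.pow 5)
  convert this using 1
  push_cast [Pi.pow_apply]; ring

lemma aux_d2 (y : ℝ) : HasDerivAt (fun y : ℝ => 5*y^4*(1-y)^4*(1-2*y))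
    (y^3*(1-y)^3*(20*(1-2*y)^2 - 10*y*(1-y))) y := by
  have h1 : HasDerivAt (fun y : ℝ => 1 - y) (-1) y := by
    simpa using (hasDerivAt_id' y).const_sub (1:ℝ)
  have h2 : HasDerivAt (fun y : ℝ => 1 - 2*y) (-2) y := by
    simpa using ((hasDerivAt_id' y).const_mul (2:ℝ)).const_sub (1:ℝ)
  have : HasDerivAt (fun y : ℝ => 5*y^4*(1-y)^4*(1-2*y)) _ y := (((hasDerivAt_pow 4 y).const_mul 5).mul (h1.pow 4)).mul h2
  convert this using 1
  push_cast [Pi.pow_apply, Pi.mul_apply]; ring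

lemma aux_key (t : ℝ) (h0 : 0 < t) (h1 : t < 1) :
    (t^3*(1-t)^3*(20*(1-2*t)^2 - 10*t*(1-t)))^2 ≤ 100*(t^5*(1-t)^5) := by
  have hu : 0 < t*(1-t) := mul_pos h0 (by linarith)
  have hg1 : 20*(1-2*t)^2 - 10*t*(1-t) ≤ 20 := by nlinarith
  have hg2 : -20 ≤ 20*(1-2*t)^2 - 10*t*(1-t) := by nlinarith
  have hgsq : (20*(1-2*t)^2 - 10*t*(1-t))^2 ≤ 400 := by nlinarith
  have hu4 : t*(1-t) ≤ 1/4 := by nlinarith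
  calc (t^3*(1-t)^3*(20*(1-2*t)^2 - 10*t*(1-t)))^2
      = (t^5*(1-t)^5) * ((t*(1-t)) * (20*(1-2*t)^2 - 10*t*(1-t))^2) := by ring
    _ ≤ (t^5*(1-t)^5) * 100 := by
        apply mul_le_mul_of_nonneg_left _
          (mul_nonneg (pow_nonneg h0.le 5) (pow_nonneg (by linarith : (0:ℝ) ≤ 1 - t) 5))
        calc (t*(1-t)) * (20*(1-2*t)^2 - 10*t*(1-t))^2
            ≤ (1/4) * 400 := mul_le_mul hu4 hgsq (sq_nonneg _) (by norm_num)
          _ = 100 := by norm_num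
    _ = 100*(t^5*(1-t)^5) := by ring

lemma aux_chi (ρ : ℝ → ℝ) (hρ' : ∀ y : ℝ, HasDerivAt ρ (2772 * (y^5*(1-y)^5)) y)
    (g : ℝ → ℝ) (α β : ℝ)
    (hg : ∀ x : ℝ, g x = if x ≤ α then 0 else if x < β + α then ρ ((x - α) / β) else 1)
    (x : ℝ) (hx : x ∈ Set.Ioo α (β+α)) :
    deriv g x = 2772 * (((x-α)/β)^5*(1-(x-α)/β)^5) * (1/β) ∧
    iteratedDeriv 3 g x =
      2772 * (((x-α)/β)^3*(1-(x-α)/β)^3*(20*(1-2*((x-α)/β))^2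
        - 10*((x-α)/β)*(1-(x-α)/β))) * (1/β)^3 := by
  have hA : ∀ z : ℝ, HasDerivAt (fun z : ℝ => (z-α)/β) (1/β) z :=
    fun z => ((hasDerivAt_id z).sub_const α).div_const β
  set F : ℝ → ℝ := fun z => ρ ((z-α)/β) with hFdef
  have hF1 : ∀ z : ℝ, HasDerivAt F
      (2772 * (((z-α)/β)^5*(1-(z-α)/β)^5) * (1/β)) z := by
    intro z
    have := (hρ' ((z-α)/β)).comp z (hA z)
    simpa [Function.comp_def, mul_assoc, hFdef] using this
  have hdF : deriv F = fun z => 2772 * (((z-α)/β)^5*(1-(z-α)/β)^5) * (1/β) :=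
    funext fun z => (hF1 z).deriv
  have hF2 : ∀ z : ℝ, HasDerivAt (deriv F)
      (2772 * (5*((z-α)/β)^4*(1-(z-α)/β)^4*(1-2*((z-α)/β))) * (1/β)^2) z := by
    intro z
    rw [hdF]
    have h : HasDerivAt (fun z : ℝ => ((z-α)/β)^5*(1-(z-α)/β)^5)
        ((5*((z-α)/β)^4*(1-(z-α)/β)^4*(1-2*((z-α)/β))) * (1/β)) z :=
      by have := (aux_d1 ((z-α)/β)).comp z (hA z); exact this
    have h3 := (h.const_mul (2772:ℝ)).mul_const (1/β)
    have h4 : 2772 * (5*((z-α)/β)^4*(1-(z-α)/β)^4*(1-2*((z-α)/β))) * (1/β)^2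
        = 2772 * ((5*((z-α)/β)^4*(1-(z-α)/β)^4*(1-2*((z-α)/β))) * (1/β)) * (1/β) := by
      ring
    rw [h4]; exact h3
  have hdF2 : deriv (deriv F)
      = fun z => 2772 * (5*((z-α)/β)^4*(1-(z-α)/β)^4*(1-2*((z-α)/β))) * (1/β)^2 :=
    funext fun z => (hF2 z).deriv
  have hF3 : ∀ z : ℝ, HasDerivAt (deriv (deriv F))
      (2772 * (((z-α)/β)^3*(1-(z-α)/β)^3*(20*(1-2*((z-α)/β))^2
        - 10*((z-α)/β)*(1-(z-α)/β))) * (1/β)^3) z := by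
    intro z
    rw [hdF2]
    have h : HasDerivAt (fun z : ℝ => 5*((z-α)/β)^4*(1-(z-α)/β)^4*(1-2*((z-α)/β)))
        ((((z-α)/β)^3*(1-(z-α)/β)^3*(20*(1-2*((z-α)/β))^2
          - 10*((z-α)/β)*(1-(z-α)/β))) * (1/β)) z :=
      by have := (aux_d2 ((z-α)/β)).comp z (hA z); exact this
    have h3 := (h.const_mul (2772:ℝ)).mul_const ((1/β)^2)
    have h4 : 2772 * (((z-α)/β)^3*(1-(z-α)/β)^3*(20*(1-2*((z-α)/β))^2
          - 10*((z-α)/β)*(1-(z-α)/β))) * (1/β)^3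
        = 2772 * ((((z-α)/β)^3*(1-(z-α)/β)^3*(20*(1-2*((z-α)/β))^2
          - 10*((z-α)/β)*(1-(z-α)/β))) * (1/β)) * (1/β)^2 := by
      ring
    rw [h4]; exact h3
  have hmem : Set.Ioo α (β+α) ∈ nhds x := Ioo_mem_nhds hx.1 hx.2
  have hev : g =ᶠ[nhds x] F := by
    filter_upwards [hmem] with z hz
    rw [hg z, if_neg (not_le.2 hz.1), if_pos hz.2]
  constructor
  · rw [hev.deriv_eq, (hF1 x).deriv]
  · have e3 : iteratedDeriv 3 g x = deriv (deriv (deriv g)) x := by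
      rw [show (3:ℕ) = 2+1 from rfl, iteratedDeriv_succ,
        show (2:ℕ) = 1+1 from rfl, iteratedDeriv_succ, iteratedDeriv_one]
    rw [e3, (hev.deriv.deriv).deriv_eq, (hF3 x).deriv]

set_option maxHeartbeats 1000000 in
theorem stmt_6 (ε b : ℝ) (hε : 0 < ε) (hb : 0 < b)
    (ρ : ℝ → ℝ) (χ : ℝ → ℝ → ℝ → ℝ)
    (hρ : ∀ x : ℝ, ρ x = 2772 * ∫ y in (0:ℝ)..x, y ^ 5 * (1 - y) ^ 5)
    (hχ : ∀ α β x : ℝ, 0 < α → 0 < β → χ α β x =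
      if x ≤ α then 0 else if x < β + α then ρ ((x - α) / β) else 1) :
    ∃ c : ℝ, ∀ x ∈ Set.Ioo ε (b + ε),
      (iteratedDeriv 3 (χ ε b) x) ^ 2 / deriv (χ ε b) x
        ≤ c * deriv (χ (ε / 3) (b + ε)) x := by
  have hbε : 0 < b + ε := by linarith
  have hρ' : ∀ y : ℝ, HasDerivAt ρ (2772 * (y^5*(1-y)^5)) y := by
    have hcont : Continuous (fun y : ℝ => y^5*(1-y)^5) := by fun_prop
    have hρfun : ρ = fun u => 2772 * ∫ t in (0:ℝ)..u, t^5*(1-t)^5 := funext hρ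
    intro y
    rw [hρfun]
    exact ((hcont.integral_hasStrictDerivAt 0 y).hasDerivAt).const_mul 2772
  set m : ℝ := 2772 * ((2*ε/3/(b+ε))^5 * (ε/3/(b+ε))^5) with hmdef
  have hm : 0 < m := by positivity
  refine ⟨277200 * (b+ε) / (b^5 * m), fun x hx => ?_⟩
  obtain ⟨hd1, hd3⟩ := aux_chi ρ hρ' (χ ε b) ε b (fun z => hχ ε b z hε hb) x hx
  have hx2 : x ∈ Set.Ioo (ε/3) ((b+ε) + ε/3) :=
    ⟨by linarith [hx.1], by linarith [hx.2]⟩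
  have hds := (aux_chi ρ hρ' (χ (ε/3) (b+ε)) (ε/3) (b+ε)
    (fun z => hχ (ε/3) (b+ε) z (by linarith) hbε) x hx2).1
  rw [hd1, hd3, hds]
  set t : ℝ := (x - ε)/b with htdef
  set s : ℝ := (x - ε/3)/(b+ε) with hsdef
  have ht0 : 0 < t := div_pos (by linarith [hx.1]) hb
  have ht1 : t < 1 := (div_lt_one hb).2 (by linarith [hx.2])
  have ht1' : 0 < 1 - t := by linarith
  have hs0 : 2*ε/3/(b+ε) ≤ s := by
    rw [hsdef]; gcongr; linarith [hx.1]
  have hspos : 0 < s := lt_of_lt_of_le (by positivity) hs0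
  have h1s : ε/3/(b+ε) ≤ 1 - s := by
    have h1 : s ≤ (b+ε-ε/3)/(b+ε) := by rw [hsdef]; gcongr; linarith [hx.2]
    have h2 : 1 - (b+ε-ε/3)/(b+ε) = ε/3/(b+ε) := by field_simp; ring
    linarith
  have h1spos : 0 < 1 - s := lt_of_lt_of_le (by positivity) h1s
  have hqs : m ≤ 2772 * (s^5*(1-s)^5) := by
    have e1 : (2*ε/3/(b+ε))^5 ≤ s^5 := pow_le_pow_left₀ (by positivity) hs0 5
    have e2 : (ε/3/(b+ε))^5 ≤ (1-s)^5 := pow_le_pow_left₀ (by positivity) h1s 5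
    have := mul_le_mul e1 e2 (by positivity) (pow_nonneg hspos.le 5)
    rw [hmdef]
    nlinarith [this]
  have hkey : (t^3*(1-t)^3*(20*(1-2*t)^2 - 10*t*(1-t)))^2 ≤ 100*(t^5*(1-t)^5) :=
    aux_key t ht0 ht1
  have hApos : 0 < t^5*(1-t)^5 := mul_pos (pow_pos ht0 5) (pow_pos ht1' 5)
  have hQpos : 0 < s^5*(1-s)^5 := mul_pos (pow_pos hspos 5) (pow_pos h1spos 5)
  have hABpos : 0 < (t^5*(1-t)^5) * b^5 := mul_pos hApos (pow_pos hb 5)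
  calc (2772 * (t^3*(1-t)^3*(20*(1-2*t)^2 - 10*t*(1-t))) * (1/b)^3)^2
        / (2772 * (t^5*(1-t)^5) * (1/b))
      = 2772 * ((t^3*(1-t)^3*(20*(1-2*t)^2 - 10*t*(1-t)))^2 / ((t^5*(1-t)^5) * b^5)) := by
        field_simp
    _ ≤ 2772 * ((100*(t^5*(1-t)^5)) / ((t^5*(1-t)^5) * b^5)) := by
        apply mul_le_mul_of_nonneg_left ((div_le_div_iff_of_pos_right hABpos).2 hkey) (by norm_num)
    _ = 277200 / b^5 := by
        rw [mul_div_assoc']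
        rw [div_eq_div_iff (ne_of_gt hABpos) (ne_of_gt (pow_pos hb 5))]
        ring
    _ ≤ 277200 * (b+ε) / (b^5 * m) * (2772 * (s^5*(1-s)^5) * (1/(b+ε))) := by
        have heq : 277200 * (b+ε) / (b^5 * m) * (2772 * (s^5*(1-s)^5) * (1/(b+ε)))
            = 277200 * (2772 * (s^5*(1-s)^5)) / (b^5 * m) := by
          field_simp
        rw [heq, div_le_div_iff₀ (by positivity) (by positivity)]
        nlinarith [mul_le_mul_of_nonneg_left hqs
          (le_of_lt (by positivity : (0:ℝ) < 277200 * b^5))]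
end

section
/- Let n ∈ ℤ⁺ and ε, b > 0. With χₙ(x;ε,b) = xⁿχ(x;ε,b), the limit as x → ε⁺ of (χₙ'''(x;ε,b))²/χₙ'(x;ε,b) equals 0; consequently the ratio (χₙ''')²/χₙ' is bounded on [ε, b+ε] by a constant c(n,b). -/
open MeasureTheory intervalIntegral Set Filter Topology

noncomputable section Aux8

/-- ρ as an explicit polynomial -/
def q0' (s : ℝ) : ℝ := 462*s^6 - 1980*s^7 + 3465*s^8 - 3080*s^9 + 1386*s^10 - 252*s^11
def q1' (s : ℝ) : ℝ := 2772*s^5 - 13860*s^6 + 27720*s^7 - 27720*s^8 + 13860*s^9 - 2772*s^10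
def q2' (s : ℝ) : ℝ := 13860*s^4 - 83160*s^5 + 194040*s^6 - 221760*s^7 + 124740*s^8 - 27720*s^9
def q3' (s : ℝ) : ℝ := 55440*s^3 - 415800*s^4 + 1164240*s^5 - 1552320*s^6 + 997920*s^7 - 249480*s^8

lemma hq0' (s : ℝ) : HasDerivAt q0' (q1' s) s := by
  have h := ((((((hasDerivAt_pow 6 s).const_mul (462:ℝ)).sub
    ((hasDerivAt_pow 7 s).const_mul (1980:ℝ))).add
    ((hasDerivAt_pow 8 s).const_mul (3465:ℝ))).sub
    ((hasDerivAt_pow 9 s).const_mul (3080:ℝ))).add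
    ((hasDerivAt_pow 10 s).const_mul (1386:ℝ))).sub
    ((hasDerivAt_pow 11 s).const_mul (252:ℝ))
  refine h.congr_deriv ?_
  simp only [q1']; push_cast; ring

lemma hq1' (s : ℝ) : HasDerivAt q1' (q2' s) s := by
  have h := ((((((hasDerivAt_pow 5 s).const_mul (2772:ℝ)).sub
    ((hasDerivAt_pow 6 s).const_mul (13860:ℝ))).add
    ((hasDerivAt_pow 7 s).const_mul (27720:ℝ))).sub
    ((hasDerivAt_pow 8 s).const_mul (27720:ℝ))).add
    ((hasDerivAt_pow 9 s).const_mul (13860:ℝ))).sub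
    ((hasDerivAt_pow 10 s).const_mul (2772:ℝ))
  refine h.congr_deriv ?_
  simp only [q2']; push_cast; ring

lemma hq2' (s : ℝ) : HasDerivAt q2' (q3' s) s := by
  have h := ((((((hasDerivAt_pow 4 s).const_mul (13860:ℝ)).sub
    ((hasDerivAt_pow 5 s).const_mul (83160:ℝ))).add
    ((hasDerivAt_pow 6 s).const_mul (194040:ℝ))).sub
    ((hasDerivAt_pow 7 s).const_mul (221760:ℝ))).add
    ((hasDerivAt_pow 8 s).const_mul (124740:ℝ))).sub
    ((hasDerivAt_pow 9 s).const_mul (27720:ℝ))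
  refine h.congr_deriv ?_
  simp only [q3']; push_cast; ring

lemma q0'_int (s : ℝ) : 2772 * ∫ y in (0:ℝ)..s, y ^ 5 * (1 - y) ^ 5 = q0' s := by
  have h : ∫ y in (0:ℝ)..s, y ^ 5 * (1 - y) ^ 5 = q0' s / 2772 - q0' 0 / 2772 := by
    apply intervalIntegral.integral_eq_sub_of_hasDerivAt
    · intro y _
      have := (hq0' y).div_const 2772
      refine this.congr_deriv ?_
      simp [q1']; ring
    · exact (Continuous.intervalIntegrable (by fun_prop) _ _)
  rw [h]; simp [q0']; ring

end Aux8

noncomputable section G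
variable (n : ℕ) (ε b : ℝ)

def u' (ε b : ℝ) (x : ℝ) : ℝ := (x - ε) / b

def G0 (x : ℝ) : ℝ := x ^ n * q0' ((x - ε)/b)

def G1' (x : ℝ) : ℝ := ↑n * x ^ (n-1) * q0' ((x-ε)/b) + x ^ n * (q1' ((x-ε)/b) * (1/b))

def G2' (x : ℝ) : ℝ :=
  (↑n * (↑(n-1) * x ^ (n-1-1)) * q0' ((x-ε)/b) + ↑n * x ^ (n-1) * (q1' ((x-ε)/b) * (1/b))) +
  (↑n * x ^ (n-1) * (q1' ((x-ε)/b) * (1/b)) + x ^ n * (q2' ((x-ε)/b) * (1/b) * (1/b)))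

def G3' (x : ℝ) : ℝ :=
  ((↑n * (↑(n-1) * (↑(n-1-1) * x ^ (n-1-1-1))) * q0' ((x-ε)/b)
      + ↑n * (↑(n-1) * x ^ (n-1-1)) * (q1' ((x-ε)/b) * (1/b)))
    + (↑n * (↑(n-1) * x ^ (n-1-1)) * (q1' ((x-ε)/b) * (1/b))
      + ↑n * x ^ (n-1) * (q2' ((x-ε)/b) * (1/b) * (1/b))))
  + ((↑n * (↑(n-1) * x ^ (n-1-1)) * (q1' ((x-ε)/b) * (1/b))
      + ↑n * x ^ (n-1) * (q2' ((x-ε)/b) * (1/b) * (1/b)))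
    + (↑n * x ^ (n-1) * (q2' ((x-ε)/b) * (1/b) * (1/b))
      + x ^ n * (q3' ((x-ε)/b) * (1/b) * (1/b) * (1/b))))

variable {P P' : ℝ → ℝ}

lemma comp_u (hP : ∀ s, HasDerivAt P (P' s) s) (x : ℝ) :
    HasDerivAt (fun x => P ((x - ε)/b)) (P' ((x - ε)/b) * (1/b)) x :=
  HasDerivAt.comp x (hP _) (((hasDerivAt_id x).sub_const ε).div_const b)

lemma hG0 (x : ℝ) : HasDerivAt (G0 n ε b) (G1' n ε b x) x :=
  (hasDerivAt_pow n x).mul (comp_u ε b hq0' x)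

lemma hG1 (x : ℝ) : HasDerivAt (G1' n ε b) (G2' n ε b x) x :=
  (((hasDerivAt_pow (n-1) x).const_mul (n:ℝ)).mul (comp_u ε b hq0' x)).add
    ((hasDerivAt_pow n x).mul ((comp_u ε b hq1' x).mul_const (1/b)))

lemma hG2 (x : ℝ) : HasDerivAt (G2' n ε b) (G3' n ε b x) x := by
  refine HasDerivAt.add (HasDerivAt.add ?_ ?_) (HasDerivAt.add ?_ ?_)
  · exact (((hasDerivAt_pow (n-1-1) x).const_mul ((n-1:ℕ):ℝ)).const_mul (n:ℝ)).mul
      (comp_u ε b hq0' x)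
  · exact (((hasDerivAt_pow (n-1) x).const_mul (n:ℝ)).mul ((comp_u ε b hq1' x).mul_const (1/b)))
  · exact (((hasDerivAt_pow (n-1) x).const_mul (n:ℝ)).mul ((comp_u ε b hq1' x).mul_const (1/b)))
  · exact ((hasDerivAt_pow n x).mul (((comp_u ε b hq2' x).mul_const (1/b)).mul_const (1/b)))

end G

noncomputable section Fact
variable (n : ℕ) (ε b : ℝ)

def p0 (s : ℝ) : ℝ := 462 - 1980*s + 3465*s^2 - 3080*s^3 + 1386*s^4 - 252*s^5
def p1 (s : ℝ) : ℝ := 2772 - 13860*s + 27720*s^2 - 27720*s^3 + 13860*s^4 - 2772*s^5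
def p2 (s : ℝ) : ℝ := 13860 - 83160*s + 194040*s^2 - 221760*s^3 + 124740*s^4 - 27720*s^5
def p3 (s : ℝ) : ℝ := 55440 - 415800*s + 1164240*s^2 - 1552320*s^3 + 997920*s^4 - 249480*s^5

def BB (x : ℝ) : ℝ :=
  ↑n * x ^ (n-1) * (((x-ε)/b) * p0 ((x-ε)/b)) + x ^ n * (p1 ((x-ε)/b) * (1/b))

def AA (x : ℝ) : ℝ :=
  ((↑n * (↑(n-1) * (↑(n-1-1) * x ^ (n-1-1-1))) * (((x-ε)/b)^3 * p0 ((x-ε)/b))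
      + ↑n * (↑(n-1) * x ^ (n-1-1)) * ((((x-ε)/b)^2 * p1 ((x-ε)/b)) * (1/b)))
    + (↑n * (↑(n-1) * x ^ (n-1-1)) * ((((x-ε)/b)^2 * p1 ((x-ε)/b)) * (1/b))
      + ↑n * x ^ (n-1) * ((((x-ε)/b) * p2 ((x-ε)/b)) * (1/b) * (1/b))))
  + ((↑n * (↑(n-1) * x ^ (n-1-1)) * ((((x-ε)/b)^2 * p1 ((x-ε)/b)) * (1/b))
      + ↑n * x ^ (n-1) * ((((x-ε)/b) * p2 ((x-ε)/b)) * (1/b) * (1/b)))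
    + (↑n * x ^ (n-1) * ((((x-ε)/b) * p2 ((x-ε)/b)) * (1/b) * (1/b))
      + x ^ n * (p3 ((x-ε)/b) * (1/b) * (1/b) * (1/b))))

lemma G1'_fact (x : ℝ) : G1' n ε b x = ((x-ε)/b)^5 * BB n ε b x := by
  simp only [G1', BB, q0', q1', p0, p1]; ring

lemma G3'_fact (x : ℝ) : G3' n ε b x = ((x-ε)/b)^3 * AA n ε b x := by
  simp only [G3', AA, q0', q1', q2', q3', p0, p1, p2, p3]; ring

lemma AA_cont : Continuous (AA n ε b) := by unfold AA p0 p1 p2 p3; fun_prop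
lemma BB_cont : Continuous (BB n ε b) := by unfold BB p0 p1; fun_prop
lemma G1'_cont : Continuous (G1' n ε b) := by unfold G1' q0' q1'; fun_prop
lemma G3'_cont : Continuous (G3' n ε b) := by unfold G3' q0' q1' q2' q3'; fun_prop

lemma BB_at_eps : BB n ε b ε = ε ^ n * (2772 * (1/b)) := by simp [BB, p1]

end Fact

theorem stmt_8 (n : ℕ) (hn : 1 ≤ n) (ε b : ℝ) (hε : 0 < ε) (hb : 0 < b)
    (ρ χ χn : ℝ → ℝ)
    (hρ : ∀ x : ℝ, ρ x = 2772 * ∫ y in (0:ℝ)..x, y ^ 5 * (1 - y) ^ 5)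
    (hχ : ∀ x : ℝ, χ x =
      if x ≤ ε then 0 else if x < b + ε then ρ ((x - ε) / b) else 1)
    (hχn : ∀ x : ℝ, χn x = x ^ n * χ x) :
    Tendsto (fun x : ℝ => (iteratedDeriv 3 χn x) ^ 2 / deriv χn x)
      (𝓝[>] ε) (𝓝 0) ∧
    ∃ c : ℝ, ∀ x ∈ Set.Icc ε (b + ε),
      |(iteratedDeriv 3 χn x) ^ 2 / deriv χn x| ≤ c := by
  have hεb : ε < b + ε := by linarith
  have hρq : ∀ s : ℝ, ρ s = q0' s := fun s => by rw [hρ, q0'_int]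
  have hopen : IsOpen (Ioo ε (b+ε)) := isOpen_Ioo
  have hEq : ∀ y ∈ Ioo ε (b+ε), χn y = G0 n ε b y := by
    intro y hy
    rw [hχn, hχ, if_neg (not_le.2 hy.1), if_pos hy.2, hρq]
    rfl
  have hd1 : ∀ y ∈ Ioo ε (b+ε), deriv χn y = G1' n ε b y := by
    intro y hy
    have hev : χn =ᶠ[𝓝 y] G0 n ε b := eventually_of_mem (hopen.mem_nhds hy) hEq
    rw [hev.deriv_eq, (hG0 n ε b y).deriv]
  have hd2 : ∀ y ∈ Ioo ε (b+ε), deriv (deriv χn) y = G2' n ε b y := by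
    intro y hy
    have hev : deriv χn =ᶠ[𝓝 y] G1' n ε b := eventually_of_mem (hopen.mem_nhds hy) hd1
    rw [hev.deriv_eq, (hG1 n ε b y).deriv]
  have hd3 : ∀ y ∈ Ioo ε (b+ε), deriv (deriv (deriv χn)) y = G3' n ε b y := by
    intro y hy
    have hev : deriv (deriv χn) =ᶠ[𝓝 y] G2' n ε b := eventually_of_mem (hopen.mem_nhds hy) hd2
    rw [hev.deriv_eq, (hG2 n ε b y).deriv]
  have h33 : iteratedDeriv 3 χn = deriv (deriv (deriv χn)) := by
    rw [show (3:ℕ) = 2+1 from rfl, iteratedDeriv_succ,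
        show (2:ℕ) = 1+1 from rfl, iteratedDeriv_succ, iteratedDeriv_one]
  have hiter3 : ∀ y ∈ Ioo ε (b+ε), iteratedDeriv 3 χn y = G3' n ε b y := by
    intro y hy; rw [h33, hd3 y hy]
  -- B positivity at ε and eventual positivity
  have hBpos : 0 < BB n ε b ε := by rw [BB_at_eps]; positivity
  have hBev : ∀ᶠ x in 𝓝 ε, 0 < BB n ε b x :=
    ((BB_cont n ε b).tendsto ε).eventually (eventually_gt_nhds hBpos)
  -- the model tendsto
  have hUten : Tendsto (fun x : ℝ => (x-ε)/b) (𝓝 ε) (𝓝 0) := by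
    have hc : Continuous fun x : ℝ => (x-ε)/b := by fun_prop
    have h := hc.tendsto ε
    simpa using h
  have hratioAB : Tendsto (fun x => (x-ε)/b * ((AA n ε b x)^2 / BB n ε b x))
      (𝓝[>] ε) (𝓝 0) := by
    have h2 : Tendsto (fun x => (AA n ε b x)^2 / BB n ε b x) (𝓝 ε)
        (𝓝 ((AA n ε b ε)^2 / BB n ε b ε)) :=
      (((AA_cont n ε b).tendsto ε).pow 2).div ((BB_cont n ε b).tendsto ε) (ne_of_gt hBpos)
    have h3 := hUten.mul h2
    rw [zero_mul] at h3
    exact h3.mono_left nhdsWithin_le_nhds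
  have hEqRatio : ∀ᶠ x in 𝓝[>] ε,
      (iteratedDeriv 3 χn x)^2 / deriv χn x = (x-ε)/b * ((AA n ε b x)^2 / BB n ε b x) := by
    filter_upwards [Ioo_mem_nhdsGT hεb, hBev.filter_mono nhdsWithin_le_nhds,
      self_mem_nhdsWithin] with x hx hBx hx'
    rw [hiter3 x hx, hd1 x hx, G3'_fact, G1'_fact]
    have hxe : (0:ℝ) < x - ε := sub_pos.2 hx'
    have hu0 : (x-ε)/b ≠ 0 := by positivity
    have hB0 : BB n ε b x ≠ 0 := ne_of_gt hBx
    field_simp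
  have hT : Tendsto (fun x : ℝ => (iteratedDeriv 3 χn x) ^ 2 / deriv χn x)
      (𝓝[>] ε) (𝓝 0) := Filter.Tendsto.congr' (Filter.EventuallyEq.symm hEqRatio) hratioAB
  refine ⟨hT, ?_⟩
  -- positivity of G1' on (ε, b+ε]
  have hq0pos : ∀ s : ℝ, 0 < s → s ≤ 1 → 0 < q0' s := by
    intro s hs hs1
    rw [← q0'_int]
    have hpos : 0 < ∫ y in (0:ℝ)..s, y ^ 5 * (1 - y) ^ 5 := by
      apply intervalIntegral.intervalIntegral_pos_of_pos_on
      · exact (Continuous.intervalIntegrable (by fun_prop) _ _)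
      · intro y hy
        have h1 : 0 < y := hy.1
        have h2 : 0 < 1 - y := by have := lt_of_lt_of_le hy.2 hs1; linarith
        positivity
      · exact hs
    linarith
  have hq1nonneg : ∀ s : ℝ, 0 ≤ s → s ≤ 1 → 0 ≤ q1' s := by
    intro s h0 h1
    have hq : q1' s = 2772 * s^5 * (1-s)^5 := by unfold q1'; ring
    rw [hq]
    have h2 : (0:ℝ) ≤ 1 - s := by linarith
    positivity
  have hG1pos : ∀ x : ℝ, ε < x → x ≤ b + ε → 0 < G1' n ε b x := by
    intro x hx1 hx2
    have hx0 : 0 < x := lt_trans hε hx1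
    have hxe : 0 < x - ε := sub_pos.2 hx1
    have hu1 : 0 < (x-ε)/b := by positivity
    have hu2 : (x-ε)/b ≤ 1 := by rw [div_le_one hb]; linarith
    have hn' : (0:ℝ) < (n:ℝ) := by exact_mod_cast Nat.lt_of_lt_of_le Nat.zero_lt_one hn
    have h1 : 0 < (n:ℝ) * x ^ (n-1) * q0' ((x-ε)/b) := by
      have := hq0pos _ hu1 hu2
      positivity
    have h2 : 0 ≤ x ^ n * (q1' ((x-ε)/b) * (1/b)) := by
      have := hq1nonneg _ (le_of_lt hu1) hu2
      positivity
    unfold G1'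
    linarith
  -- near ε : bound by 1
  have hball : {y : ℝ | |y| < 1} ∈ 𝓝 (0:ℝ) := by
    have : IsOpen {y : ℝ | |y| < 1} := isOpen_lt continuous_abs continuous_const
    exact this.mem_nhds (by simp)
  obtain ⟨w, hw, hsub⟩ := mem_nhdsGT_iff_exists_Ioo_subset.1 (hT hball)
  -- compact part
  have hφcont : ContinuousOn (fun x => (G3' n ε b x)^2 / G1' n ε b x) (Icc w (b+ε)) := by
    apply ContinuousOn.div
    · exact ((G3'_cont n ε b).pow 2).continuousOn
    · exact (G1'_cont n ε b).continuousOn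
    · intro x hx
      exact ne_of_gt (hG1pos x (lt_of_lt_of_le hw hx.1) hx.2)
  obtain ⟨M, hM⟩ := (isCompact_Icc).exists_bound_of_continuousOn hφcont
  set c0 := |(iteratedDeriv 3 χn ε)^2 / deriv χn ε| with hc0
  set c2 := |(iteratedDeriv 3 χn (b+ε))^2 / deriv χn (b+ε)| with hc2
  refine ⟨max (max c0 c2) (max 1 M), ?_⟩
  intro x hx
  rcases eq_or_lt_of_le hx.1 with h|hx1
  · rw [← h]
    exact le_trans (le_max_left c0 c2) (le_max_left _ _)
  rcases eq_or_lt_of_le hx.2 with h|hx2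
  · rw [h]
    exact le_trans (le_max_right c0 c2) (le_max_left _ _)
  by_cases hxw : x < w
  · have hmem := hsub ⟨hx1, hxw⟩
    have : |(iteratedDeriv 3 χn x)^2 / deriv χn x| < 1 := hmem
    exact le_trans (le_of_lt this) (le_trans (le_max_left 1 M) (le_max_right _ _))
  · have hxK : x ∈ Icc w (b+ε) := ⟨not_lt.1 hxw, hx.2⟩
    have hMx := hM x hxK
    rw [Real.norm_eq_abs] at hMx
    have hxO : x ∈ Ioo ε (b+ε) := ⟨hx1, hx2⟩
    rw [hiter3 x hxO, hd1 x hxO]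
    exact le_trans hMx (le_trans (le_max_right 1 M) (le_max_right _ _))
end

section
/- Let n ∈ ℤ⁺ and ε, b > 0, and χₙ(x;ε,b) = xⁿχ(x;ε,b). For each j = 1,2,3,4,5 there exists a constant c = c(n,j,b) such that |χₙ⁽ʲ⁾(x;ε,b)| ≤ c·(1 + χₙ(x;ε,b)) for all x ∈ ℝ. -/
open MeasureTheory intervalIntegral Set
open Filter Topology

lemma maxpow_hasDerivAt (m : ℕ) (x : ℝ) :
    HasDerivAt (fun x : ℝ => max x 0 ^ (m + 2)) ((m + 2) * max x 0 ^ (m + 1)) x := by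
  rcases lt_trichotomy x 0 with hx | rfl | hx
  · have h : (fun x : ℝ => max x 0 ^ (m + 2)) =ᶠ[𝓝 x] fun _ => (0:ℝ) := by
      filter_upwards [Iio_mem_nhds hx] with y (hy : y < 0)
      simp [max_eq_right hy.le]
    have : HasDerivAt (fun _ : ℝ => (0:ℝ)) 0 x := hasDerivAt_const x 0
    simpa [max_eq_right hx.le] using this.congr_of_eventuallyEq h
  · rw [hasDerivAt_iff_tendsto_slope]
    rw [show ((m:ℝ) + 2) * ((0:ℝ) ⊔ 0) ^ (m + 1) = 0 by simp]
    have hb : Tendsto (fun y : ℝ => |y| ^ (m + 1)) (𝓝[≠] (0:ℝ)) (𝓝 0) := by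
      have : Tendsto (fun y : ℝ => |y| ^ (m + 1)) (𝓝 (0:ℝ)) (𝓝 (|(0:ℝ)| ^ (m+1))) := by
        exact ((continuous_abs.pow (m+1)).tendsto 0)
      simpa using this.mono_left nhdsWithin_le_nhds
    refine squeeze_zero_norm' ?_ hb
    filter_upwards [self_mem_nhdsWithin] with y (hy : y ≠ 0)
    have h1 : max y 0 ≤ |y| := max_le (le_abs_self y) (abs_nonneg y)
    have h2 : max y 0 ^ (m+2) ≤ |y| ^ (m+2) := pow_le_pow_left₀ (le_max_right y 0) h1 _
    have : ‖slope (fun x : ℝ => max x 0 ^ (m + 2)) 0 y‖ = max y 0 ^ (m+2) / |y| := by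
      rw [slope_def_field]
      simp [abs_div, abs_pow, abs_of_nonneg (le_max_right y 0)]
    rw [this, div_le_iff₀ (abs_pos.2 hy)]
    calc max y 0 ^ (m+2) ≤ |y| ^ (m+2) := h2
      _ = |y| ^ (m+1) * |y| := by ring
  · have h : (fun x : ℝ => max x 0 ^ (m + 2)) =ᶠ[𝓝 x] fun y => y ^ (m + 2) := by
      filter_upwards [Ioi_mem_nhds hx] with y (hy : y ∈ Ioi 0)
      simp [max_eq_left (le_of_lt (mem_Ioi.1 hy))]
    have := hasDerivAt_pow (m + 2) x
    rw [show m + 2 - 1 = m + 1 by omega] at this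
    have h2 := this.congr_of_eventuallyEq h
    simpa [max_eq_left hx.le] using h2

lemma maxpow_contDiff : ∀ k : ℕ, ContDiff ℝ k (fun x : ℝ => max x 0 ^ (k + 1)) := by
  intro k
  induction k with
  | zero => exact contDiff_zero.2 ((continuous_id.max continuous_const).pow 1)
  | succ k ih =>
    rw [show ((k+1 : ℕ) : WithTop ℕ∞) = (k : ℕ) + 1 by norm_cast]
    rw [contDiff_succ_iff_deriv]
    refine ⟨fun x => (maxpow_hasDerivAt k x).differentiableAt, by simp, ?_⟩
    have : deriv (fun x : ℝ => max x 0 ^ (k + 1 + 1)) =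
        fun x => ((k : ℝ) + 2) * max x 0 ^ (k + 1) := by
      funext x
      simpa using (maxpow_hasDerivAt k x).deriv
    rw [this]
    exact contDiff_const.mul ih

noncomputable def psi (ε b : ℝ) : ℝ → ℝ :=
  fun t => (2772 / b ^ 11) * (max (t - ε) 0 ^ 5 * max (b + ε - t) 0 ^ 5)



lemma psi_contDiff (ε b : ℝ) : ContDiff ℝ 4 (psi ε b) := by
  have h := maxpow_contDiff 4
  exact contDiff_const.mul ((h.comp (contDiff_id.sub contDiff_const)).mul
    (h.comp (contDiff_const.sub contDiff_id)))

noncomputable def Fc (ε b : ℝ) : ℝ → ℝ := fun x => ∫ t in ε..x, psi ε b t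

lemma Fc_hasDerivAt (ε b x : ℝ) : HasDerivAt (Fc ε b) (psi ε b x) x :=
  ((psi_contDiff ε b).continuous.integral_hasStrictDerivAt ε x).hasDerivAt

lemma Fc_contDiff (ε b : ℝ) : ContDiff ℝ 5 (Fc ε b) := by
  rw [show (5 : WithTop ℕ∞) = ((4:ℕ) : WithTop ℕ∞) + 1 by norm_cast]
  rw [contDiff_succ_iff_deriv]
  refine ⟨fun x => (Fc_hasDerivAt ε b x).differentiableAt, by simp, ?_⟩
  have : deriv (Fc ε b) = psi ε b := funext fun x => (Fc_hasDerivAt ε b x).deriv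
  rw [this]; exact psi_contDiff ε b

lemma psi_zero_left (ε b t : ℝ) (ht : t ≤ ε) : psi ε b t = 0 := by
  simp [psi, max_eq_right (sub_nonpos.2 ht)]

lemma psi_zero_right (ε b t : ℝ) (ht : b + ε ≤ t) : psi ε b t = 0 := by
  simp [psi, max_eq_right (sub_nonpos.2 ht)]

lemma Fc_zero (ε b x : ℝ) (hx : x ≤ ε) : Fc ε b x = 0 := by
  rw [Fc, show (0:ℝ) = ∫ t in ε..x, (0:ℝ) by simp]
  refine intervalIntegral.integral_congr fun t ht => ?_
  rw [uIcc_of_ge hx] at ht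
  exact psi_zero_left ε b t ht.2

lemma Fc_mid (ε b : ℝ) (hb : 0 < b) {x : ℝ} (hx1 : ε ≤ x) (hx2 : x ≤ b + ε) :
    Fc ε b x = 2772 * ∫ y in (0:ℝ)..(x - ε)/b, y ^ 5 * (1 - y) ^ 5 := by
  have h1 : Fc ε b x = ∫ t in ε..x, (2772 / b ^ 11) * ((t - ε) ^ 5 * (b + ε - t) ^ 5) := by
    refine intervalIntegral.integral_congr fun t ht => ?_
    rw [uIcc_of_le hx1] at ht
    rw [psi, max_eq_left (sub_nonneg.2 ht.1), max_eq_left (sub_nonneg.2 (ht.2.trans hx2))]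
  have h2 : (∫ t in ε..x, (2772 / b ^ 11) * ((t - ε) ^ 5 * (b + ε - t) ^ 5))
      = ∫ s in (0:ℝ)..(x - ε), (2772 / b ^ 11) * (s ^ 5 * (b - s) ^ 5) := by
    have key := intervalIntegral.integral_comp_sub_right (a := ε) (b := x)
      (fun s => (2772 / b ^ 11) * (s ^ 5 * (b - s) ^ 5)) ε
    have e : ∀ t : ℝ, (2772 / b ^ 11) * ((t - ε) ^ 5 * (b + ε - t) ^ 5)
        = (2772 / b ^ 11) * ((t - ε) ^ 5 * (b - (t - ε)) ^ 5) := fun t => by ring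
    simp only [e]
    simpa using key
  have h3 : (∫ s in (0:ℝ)..(x - ε), (2772 / b ^ 11) * (s ^ 5 * (b - s) ^ 5))
      = 2772 * ∫ y in (0:ℝ)..(x - ε)/b, y ^ 5 * (1 - y) ^ 5 := by
    have e : ∀ s : ℝ, (2772 / b ^ 11) * (s ^ 5 * (b - s) ^ 5)
        = (2772 / b) * ((s / b) ^ 5 * (1 - s / b) ^ 5) := by
      intro s
      have hb' : b ≠ 0 := hb.ne'
      rw [show (1:ℝ) - s / b = (b - s) / b by
            rw [eq_div_iff hb', sub_mul, div_mul_cancel₀ _ hb', one_mul],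
        div_pow, div_pow, div_mul_div_comm, div_mul_div_comm, div_mul_eq_mul_div]
      rw [div_eq_div_iff (pow_ne_zero 11 hb')
        (mul_ne_zero hb' (mul_ne_zero (pow_ne_zero 5 hb') (pow_ne_zero 5 hb')))]
      ring
    simp only [e]
    rw [intervalIntegral.integral_comp_div (a := 0) (b := x - ε)
      (f := fun y => (2772 / b) * (y ^ 5 * (1 - y) ^ 5)) hb.ne']
    rw [intervalIntegral.integral_const_mul]
    rw [smul_eq_mul, zero_div]
    have hb' : b ≠ 0 := hb.ne'
    field_simp
  rw [h1, h2, h3]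

lemma beta_int : ∫ y in (0:ℝ)..1, y ^ 5 * (1 - y) ^ 5 = 1 / 2772 := by
  have e : ∀ y : ℝ, y ^ 5 * (1 - y) ^ 5
      = y ^ 5 - 5 * y ^ 6 + 10 * y ^ 7 - 10 * y ^ 8 + 5 * y ^ 9 - y ^ 10 := fun y => by ring
  simp only [e]
  rw [intervalIntegral.integral_sub, intervalIntegral.integral_add,
    intervalIntegral.integral_sub, intervalIntegral.integral_add,
    intervalIntegral.integral_sub]
  all_goals first
    | exact Continuous.intervalIntegrable (by fun_prop) 0 1
    | norm_num [intervalIntegral.integral_const_mul, integral_pow]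



lemma iteratedDeriv_zero_fun (j : ℕ) : iteratedDeriv j (fun _ : ℝ => (0:ℝ)) = fun _ => 0 := by
  induction j with
  | zero => simp [iteratedDeriv_zero]
  | succ j ih => rw [iteratedDeriv_succ, ih]; funext x; simp

lemma iteratedDeriv_pow_fun (n j : ℕ) : iteratedDeriv j (fun x : ℝ => x ^ n)
    = fun x => (n.descFactorial j : ℝ) * x ^ (n - j) := by
  induction j with
  | zero => simp [iteratedDeriv_zero]
  | succ j ih =>
    rw [iteratedDeriv_succ, ih]
    funext x
    rw [((hasDerivAt_pow (n - j) x).const_mul ((n.descFactorial j : ℝ))).deriv,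
      Nat.descFactorial_succ, ← Nat.sub_sub]
    push_cast
    ring

lemma iteratedDeriv_pow_pt (n j : ℕ) (x : ℝ) : iteratedDeriv j (fun x : ℝ => x ^ n) x
    = (n.descFactorial j : ℝ) * x ^ (n - j) := congrFun (iteratedDeriv_pow_fun n j) x

lemma Fc_one (ε b : ℝ) (hb : 0 < b) {x : ℝ} (hx : b + ε ≤ x) : Fc ε b x = 1 := by
  have hcont := (psi_contDiff ε b).continuous
  have hsplit : Fc ε b (b + ε) + ∫ t in (b+ε)..x, psi ε b t = Fc ε b x :=
    intervalIntegral.integral_add_adjacent_intervals (hcont.intervalIntegrable _ _)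
      (hcont.intervalIntegrable _ _)
  have h2 : (∫ t in (b+ε)..x, psi ε b t) = 0 := by
    rw [show (0:ℝ) = ∫ t in (b+ε)..x, (0:ℝ) by simp]
    refine intervalIntegral.integral_congr fun t ht => ?_
    rw [uIcc_of_le hx] at ht
    exact psi_zero_right ε b t ht.1
  have h1 : Fc ε b (b + ε) = 1 := by
    rw [Fc_mid ε b hb (by linarith) le_rfl,
      show (b + ε - ε)/b = (1:ℝ) by field_simp; ring, beta_int]
    norm_num
  rw [← hsplit, h1, h2, add_zero]

theorem stmt_10 (n : ℕ) (hn : 1 ≤ n) (ε b : ℝ) (hε : 0 < ε) (hb : 0 < b)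
    (ρ χ χn : ℝ → ℝ)
    (hρ : ∀ x : ℝ, ρ x = 2772 * ∫ y in (0:ℝ)..x, y ^ 5 * (1 - y) ^ 5)
    (hχ : ∀ x : ℝ, χ x =
      if x ≤ ε then 0 else if x < b + ε then ρ ((x - ε) / b) else 1)
    (hχn : ∀ x : ℝ, χn x = x ^ n * χ x) :
    ∀ j : ℕ, 1 ≤ j → j ≤ 5 →
      ∃ c : ℝ, ∀ x : ℝ, |iteratedDeriv j χn x| ≤ c * (1 + χn x) := by
  intro j hj1 hj5
  have hχF : ∀ x, χ x = Fc ε b x := by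
    intro x
    rw [hχ]
    by_cases h1 : x ≤ ε
    · rw [if_pos h1, Fc_zero ε b x h1]
    · push_neg at h1
      rw [if_neg (not_le.2 h1)]
      by_cases h2 : x < b + ε
      · rw [if_pos h2, Fc_mid ε b hb h1.le h2.le, hρ]
      · push_neg at h2
        rw [if_neg (not_lt.2 h2), Fc_one ε b hb h2]
  have hg : χn = fun x => x ^ n * Fc ε b x := funext fun x => by rw [hχn, hχF]
  have hsm : ContDiff ℝ 5 χn := by
    rw [hg]; exact (contDiff_id.pow n).mul (Fc_contDiff ε b)
  have hnonneg : ∀ x, 0 ≤ χn x := by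
    intro x
    rw [hχn, hχ]
    by_cases h1 : x ≤ ε
    · simp [h1]
    · push_neg at h1
      have hx0 : (0:ℝ) ≤ x := le_of_lt (lt_trans hε h1)
      refine mul_nonneg (pow_nonneg hx0 n) ?_
      rw [if_neg (not_le.2 h1)]
      by_cases h2 : x < b + ε
      · rw [if_pos h2, hρ]
        have hu : (0:ℝ) ≤ (x - ε)/b := div_nonneg (by linarith) hb.le
        have hu1 : (x - ε)/b ≤ 1 := (div_le_one hb).2 (by linarith)
        refine mul_nonneg (by norm_num) (intervalIntegral.integral_nonneg hu ?_)
        intro y hy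
        exact mul_nonneg (pow_nonneg hy.1 5)
          (pow_nonneg (by linarith [hy.2.trans hu1] : (0:ℝ) ≤ 1 - y) 5)
      · rw [if_neg h2]; norm_num
  obtain ⟨C, hC⟩ := (isCompact_Icc (a := ε) (b := b+ε)).exists_bound_of_continuousOn
      ((hsm.continuous_iteratedDeriv j (by exact_mod_cast hj5)).continuousOn)
  have hC0 : 0 ≤ C := le_trans (norm_nonneg _) (hC ε ⟨le_rfl, by linarith⟩)
  refine ⟨max C ((n.descFactorial j : ℝ)), fun x => ?_⟩
  set c := max C ((n.descFactorial j : ℝ)) with hc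
  have hc0 : 0 ≤ c := le_trans hC0 (le_max_left _ _)
  rcases lt_or_ge x ε with hx | hx
  · have hev : χn =ᶠ[𝓝 x] fun _ => (0:ℝ) := by
      filter_upwards [Iio_mem_nhds hx] with y (hy : y < ε)
      rw [hχn, hχ, if_pos hy.le, mul_zero]
    rw [Filter.EventuallyEq.iteratedDeriv_eq j hev, iteratedDeriv_zero_fun j]
    simp only [abs_zero]
    nlinarith [hnonneg x]
  rcases le_or_gt x (b+ε) with hx2 | hx2
  · have hCx := hC x ⟨hx, hx2⟩
    calc |iteratedDeriv j χn x| ≤ C := by simpa [Real.norm_eq_abs] using hCx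
      _ ≤ c := le_max_left _ _
      _ ≤ c * (1 + χn x) := by nlinarith [hnonneg x]
  · have hev : χn =ᶠ[𝓝 x] fun y => y ^ n := by
      filter_upwards [Ioi_mem_nhds hx2] with y (hy : b + ε < y)
      rw [hχn, hχ, if_neg (by push_neg; linarith), if_neg (by push_neg; linarith), mul_one]
    rw [Filter.EventuallyEq.iteratedDeriv_eq j hev, iteratedDeriv_pow_pt]
    have hx0 : (0:ℝ) < x := by linarith
    have hχnx : χn x = x ^ n := by
      rw [hχn, hχ, if_neg (by push_neg; linarith), if_neg (by push_neg; linarith), mul_one]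
    have hd0 : (0:ℝ) ≤ (n.descFactorial j : ℝ) := Nat.cast_nonneg _
    rw [abs_of_nonneg (mul_nonneg hd0 (pow_nonneg hx0.le _)), hχnx]
    have hkey : x ^ (n - j) ≤ 1 + x ^ n := by
      rcases le_or_gt x 1 with h1 | h1
      · have h2 : x ^ (n-j) ≤ 1 := pow_le_one₀ hx0.le h1
        nlinarith [pow_nonneg hx0.le n]
      · have h2 : x ^ (n-j) ≤ x ^ n := pow_le_pow_right₀ h1.le (Nat.sub_le n j)
        nlinarith
    have h1xn : (0:ℝ) ≤ 1 + x ^ n := by nlinarith [pow_nonneg hx0.le n]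
    calc (n.descFactorial j:ℝ) * x ^ (n-j) ≤ (n.descFactorial j:ℝ) * (1 + x^n) :=
        mul_le_mul_of_nonneg_left hkey hd0
      _ ≤ c * (1 + x^n) := mul_le_mul_of_nonneg_right (le_max_right _ _) h1xn
end
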